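/- Let n = 2k and let G_n be the n-variable majority function, i.e., the symmetric Boolean function with v(i) = 0 for i ≤ k and v(i) = 1 for i > k. Then the algebraic immunity of G_n equals k. -/

import Mathlib

open scoped Classical

/-- Hamming weight of a Boolean vector. -/
def wtv {n : ℕ} (x : Fin n → ZMod 2) : ℕ := (Finset.univ.filter (fun i => x i = 1)).card

/-- A Boolean function is symmetric if invariant under permutations of inputs. -/
def SymmF {n : ℕ} (f : (Fin n → ZMod 2) → ZMod 2) : Prop :=
  ∀ σ : Equiv.Perm (Fin n), ∀ x, f (x ∘ σ) = f x

/-- The algebraic degree of a Boolean function: the least `d` such that `f` is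
represented by a polynomial of total degree at most `d`. -/
noncomputable def funcDeg {n : ℕ} (f : (Fin n → ZMod 2) → ZMod 2) : ℕ :=
  sInf {d | ∃ P : MvPolynomial (Fin n) (ZMod 2), P.totalDegree ≤ d ∧
    ∀ x, MvPolynomial.eval x P = f x}

/-- Algebraic immunity: the minimal degree of a nonzero annihilator of `f` or `f+1`. -/
noncomputable def AI {n : ℕ} (f : (Fin n → ZMod 2) → ZMod 2) : ℕ :=
  sInf {d | ∃ g : (Fin n → ZMod 2) → ZMod 2, g ≠ 0 ∧ funcDeg g = d ∧
    (f * g = 0 ∨ (f + 1) * g = 0)}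

namespace AIproofAux

variable {n : ℕ}

lemma zmod2_cases (a : ZMod 2) : a = 0 ∨ a = 1 := by
  fin_cases a
  exacts [Or.inl rfl, Or.inr rfl]

/-- The indicator vector of a finite set of coordinates. -/
noncomputable def indVec (T : Finset (Fin n)) : Fin n → ZMod 2 :=
  fun i => if i ∈ T then 1 else 0

lemma wtv_indVec (T : Finset (Fin n)) : wtv (indVec T) = T.card := by
  unfold wtv indVec
  congr 1
  ext i
  by_cases h : i ∈ T <;> simp [h]

lemma eq_indVec (x : Fin n → ZMod 2) :
    x = indVec (Finset.univ.filter fun i => x i = 1) := by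
  funext i
  rcases zmod2_cases (x i) with h | h <;> simp [indVec, h]

lemma support_card_le (d : Fin n →₀ ℕ) : d.support.card ≤ d.sum fun _ e => e := by
  rw [Finsupp.sum]
  calc d.support.card = ∑ _i ∈ d.support, 1 := (Finset.card_eq_sum_ones _)
    _ ≤ ∑ i ∈ d.support, d i :=
      Finset.sum_le_sum fun i hi =>
        Nat.one_le_iff_ne_zero.mpr (Finsupp.mem_support_iff.mp hi)

/-- Key counting lemma: summing a polynomial over an interval of indicator
vectors gives `0` unless some monomial's support unions with the bottom to the top. -/
lemma key_sum (P : MvPolynomial (Fin n) (ZMod 2)) (A B : Finset (Fin n))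
    (h : ∀ d ∈ P.support, A ∪ d.support ≠ B) :
    ∑ T ∈ Finset.Icc A B, MvPolynomial.eval (indVec T) P = 0 := by
  have heval : ∀ T : Finset (Fin n), MvPolynomial.eval (indVec T) P
      = ∑ d ∈ P.support, P.coeff d * (if d.support ⊆ T then 1 else 0) := by
    intro T
    rw [MvPolynomial.eval_eq]
    refine Finset.sum_congr rfl fun d _ => ?_
    congr 1
    have hpow : ∀ i ∈ d.support, (indVec T i) ^ d i
        = (if i ∈ T then 1 else 0 : ZMod 2) := by
      intro i hi
      have hdi : d i ≠ 0 := Finsupp.mem_support_iff.mp hi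
      unfold indVec
      by_cases hiT : i ∈ T <;> simp [hiT, zero_pow hdi]
    rw [Finset.prod_congr rfl hpow, Finset.prod_boole]
    congr 1
  simp_rw [heval]
  rw [Finset.sum_comm]
  refine Finset.sum_eq_zero fun d hd => ?_
  rw [← Finset.mul_sum]
  have hinner : (∑ T ∈ Finset.Icc A B, (if d.support ⊆ T then 1 else 0 : ZMod 2)) = 0 := by
    rw [Finset.sum_boole]
    have hfilter : (Finset.Icc A B).filter (fun T => d.support ⊆ T)
        = Finset.Icc (A ∪ d.support) B := by
      ext T
      simp only [Finset.mem_filter, Finset.mem_Icc]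
      constructor
      · rintro ⟨⟨h1, h2⟩, h3⟩
        exact ⟨Finset.union_subset h1 h3, h2⟩
      · rintro ⟨h1, h2⟩
        exact ⟨⟨(Finset.subset_union_left).trans h1, h2⟩,
          (Finset.subset_union_right).trans h1⟩
    rw [hfilter]
    by_cases hsub : A ∪ d.support ⊆ B
    · rw [Finset.card_Icc_finset hsub]
      have hlt : (A ∪ d.support).card < B.card :=
        Finset.card_lt_card (HasSubset.Subset.ssubset_of_ne hsub (h d hd))
      have he : B.card - (A ∪ d.support).card ≠ 0 := by omega
      push_cast
      have h2 : (2 : ZMod 2) = 0 := by decide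
      rw [h2, zero_pow he]
    · rw [Finset.Icc_eq_empty hsub, Finset.card_empty]
      simp
  rw [hinner, mul_zero]

/-- A nonzero function represented by `P` is nonzero at a point of weight
at most the total degree of `P`. -/
lemma exists_low (P : MvPolynomial (Fin n) (ZMod 2)) (g : (Fin n → ZMod 2) → ZMod 2)
    (hrep : ∀ x, MvPolynomial.eval x P = g x) (hg : g ≠ 0) :
    ∃ x, g x ≠ 0 ∧ wtv x ≤ P.totalDegree := by
  obtain ⟨x0, hx0⟩ := Function.ne_iff.mp hg
  set N : Finset (Finset (Fin n)) := Finset.univ.filter (fun S => g (indVec S) ≠ 0) with hN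
  have hx0' : (Finset.univ.filter fun i => x0 i = 1) ∈ N := by
    simp only [hN, Finset.mem_filter, Finset.mem_univ, true_and]
    rw [← eq_indVec]; exact hx0
  obtain ⟨S, hSN, hSmin⟩ := Finset.exists_min_image N Finset.card ⟨_, hx0'⟩
  have hSne : g (indVec S) ≠ 0 := by
    simpa [hN] using hSN
  refine ⟨indVec S, hSne, ?_⟩
  rw [wtv_indVec]
  by_contra hlt
  push_neg at hlt
  have hcond : ∀ d ∈ P.support, ∅ ∪ d.support ≠ S := by
    intro d hd heq
    rw [Finset.empty_union] at heq
    have h1 := support_card_le d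
    have h2 := MvPolynomial.le_totalDegree hd
    rw [heq] at h1
    omega
  have hkey := key_sum P ∅ S hcond
  have hmem : S ∈ Finset.Icc (∅ : Finset (Fin n)) S :=
    Finset.mem_Icc.mpr ⟨bot_le, le_rfl⟩
  have hzero : ∀ T ∈ Finset.Icc (∅ : Finset (Fin n)) S, T ≠ S →
      MvPolynomial.eval (indVec T) P = 0 := by
    intro T hT hTS
    rw [hrep]
    by_contra hne
    have hTN : T ∈ N := by simp [hN, hne]
    have hge := hSmin T hTN
    have hTsub : T ⊆ S := Finset.le_iff_subset.mp (Finset.mem_Icc.mp hT).2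
    have : T.card < S.card :=
      Finset.card_lt_card (HasSubset.Subset.ssubset_of_ne hTsub hTS)
    omega
  rw [Finset.sum_eq_single_of_mem S hmem hzero, hrep] at hkey
  exact hSne hkey

/-- A nonzero function represented by `P` is nonzero at a point of weight
at least `n` minus the total degree of `P`. -/
lemma exists_high (P : MvPolynomial (Fin n) (ZMod 2)) (g : (Fin n → ZMod 2) → ZMod 2)
    (hrep : ∀ x, MvPolynomial.eval x P = g x) (hg : g ≠ 0) :
    ∃ x, g x ≠ 0 ∧ n ≤ wtv x + P.totalDegree := by
  obtain ⟨x0, hx0⟩ := Function.ne_iff.mp hg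
  set N : Finset (Finset (Fin n)) := Finset.univ.filter (fun S => g (indVec S) ≠ 0) with hN
  have hx0' : (Finset.univ.filter fun i => x0 i = 1) ∈ N := by
    simp only [hN, Finset.mem_filter, Finset.mem_univ, true_and]
    rw [← eq_indVec]; exact hx0
  obtain ⟨S, hSN, hSmax⟩ := Finset.exists_max_image N Finset.card ⟨_, hx0'⟩
  have hSne : g (indVec S) ≠ 0 := by
    simpa [hN] using hSN
  refine ⟨indVec S, hSne, ?_⟩
  rw [wtv_indVec]
  by_contra hlt
  push_neg at hlt
  have hcond : ∀ d ∈ P.support, S ∪ d.support ≠ Finset.univ := by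
    intro d hd heq
    have h1 := support_card_le d
    have h2 := MvPolynomial.le_totalDegree hd
    have h3 : (S ∪ d.support).card ≤ S.card + d.support.card := Finset.card_union_le _ _
    rw [heq] at h3
    have h4 : (Finset.univ : Finset (Fin n)).card = n := by
      rw [Finset.card_univ, Fintype.card_fin]
    omega
  have hkey := key_sum P S Finset.univ hcond
  have hmem : S ∈ Finset.Icc S (Finset.univ : Finset (Fin n)) :=
    Finset.mem_Icc.mpr ⟨le_rfl, le_top⟩
  have hzero : ∀ T ∈ Finset.Icc S (Finset.univ : Finset (Fin n)), T ≠ S →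
      MvPolynomial.eval (indVec T) P = 0 := by
    intro T hT hTS
    rw [hrep]
    by_contra hne
    have hTN : T ∈ N := by simp [hN, hne]
    have hge := hSmax T hTN
    have hTsub : S ⊆ T := Finset.le_iff_subset.mp (Finset.mem_Icc.mp hT).1
    have : S.card < T.card :=
      Finset.card_lt_card (HasSubset.Subset.ssubset_of_ne hTsub (Ne.symm hTS))
    omega
  rw [Finset.sum_eq_single_of_mem S hmem hzero, hrep] at hkey
  exact hSne hkey

/-- Interpolation: every Boolean function is represented by some polynomial. -/
noncomputable def interp (g : (Fin n → ZMod 2) → ZMod 2) : MvPolynomial (Fin n) (ZMod 2) :=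
  ∑ a : Fin n → ZMod 2, MvPolynomial.C (g a) *
    ∏ i, (MvPolynomial.X i + MvPolynomial.C (a i) + 1)

lemma eval_interp (g : (Fin n → ZMod 2) → ZMod 2) (x : Fin n → ZMod 2) :
    MvPolynomial.eval x (interp g) = g x := by
  unfold interp
  rw [map_sum]
  have hterm : ∀ a : Fin n → ZMod 2,
      MvPolynomial.eval x (MvPolynomial.C (g a) *
        ∏ i, (MvPolynomial.X i + MvPolynomial.C (a i) + 1))
      = g a * ∏ i, (x i + a i + 1) := by
    intro a
    rw [map_mul, MvPolynomial.eval_C, map_prod]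
    congr 1
    refine Finset.prod_congr rfl fun i _ => ?_
    simp
  simp_rw [hterm]
  rw [Finset.sum_eq_single_of_mem x (Finset.mem_univ x)]
  · have : ∀ i : Fin n, x i + x i + 1 = (1 : ZMod 2) := by
      intro i
      rcases zmod2_cases (x i) with h | h <;> rw [h] <;> decide
    rw [Finset.prod_congr rfl fun i _ => this i, Finset.prod_const_one, mul_one]
  · intro a _ hax
    obtain ⟨i, hi⟩ := Function.ne_iff.mp (Ne.symm hax)
    have hzero : x i + a i + 1 = (0 : ZMod 2) := by
      rcases zmod2_cases (x i) with h1 | h1 <;> rcases zmod2_cases (a i) with h2 | h2 <;>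
        rw [h1, h2] <;> first | decide | (exfalso; apply hi; rw [h1, h2])
    rw [Finset.prod_eq_zero (Finset.mem_univ i) hzero, mul_zero]

lemma funcDeg_set_nonempty (g : (Fin n → ZMod 2) → ZMod 2) :
    {d | ∃ P : MvPolynomial (Fin n) (ZMod 2), P.totalDegree ≤ d ∧
      ∀ x, MvPolynomial.eval x P = g x}.Nonempty :=
  ⟨(interp g).totalDegree, interp g, le_rfl, eval_interp g⟩

lemma exists_poly_funcDeg (g : (Fin n → ZMod 2) → ZMod 2) :
    ∃ P : MvPolynomial (Fin n) (ZMod 2), P.totalDegree ≤ funcDeg g ∧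
      ∀ x, MvPolynomial.eval x P = g x :=
  Nat.sInf_mem (funcDeg_set_nonempty g)

lemma funcDeg_le (g : (Fin n → ZMod 2) → ZMod 2) (P : MvPolynomial (Fin n) (ZMod 2))
    (h : ∀ x, MvPolynomial.eval x P = g x) : funcDeg g ≤ P.totalDegree :=
  Nat.sInf_le ⟨P, le_rfl, h⟩

end AIproofAux

open AIproofAux in
theorem stmt5 (k : ℕ) {n : ℕ} (hn : n = 2 * k)
    (G : (Fin n → ZMod 2) → ZMod 2)
    (hG : ∀ x, G x = if wtv x ≤ k then 0 else 1) :
    AI G = k := by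
  have hkn : k ≤ n := by omega
  -- the set K of the first k coordinates
  set K : Finset (Fin n) := Finset.univ.map (Fin.castLEEmb hkn) with hK
  have hKcard : K.card = k := by
    rw [hK, Finset.card_map, Finset.card_univ, Fintype.card_fin]
  -- the annihilator g and its polynomial representation
  set g : (Fin n → ZMod 2) → ZMod 2 := fun x => ∏ i ∈ K, (1 + x i) with hg
  set P : MvPolynomial (Fin n) (ZMod 2) := ∏ i ∈ K, (1 + MvPolynomial.X i) with hP
  have hrep : ∀ x, MvPolynomial.eval x P = g x := by
    intro x
    rw [hP, map_prod]
    refine Finset.prod_congr rfl fun i _ => ?_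
    simp
  have htot : P.totalDegree ≤ k := by
    calc P.totalDegree ≤ ∑ i ∈ K, (1 + MvPolynomial.X i : MvPolynomial (Fin n) (ZMod 2)).totalDegree :=
          MvPolynomial.totalDegree_finset_prod _ _
      _ ≤ ∑ _i ∈ K, 1 := by
          refine Finset.sum_le_sum fun i _ => ?_
          calc (1 + MvPolynomial.X i : MvPolynomial (Fin n) (ZMod 2)).totalDegree
              ≤ max (1 : MvPolynomial (Fin n) (ZMod 2)).totalDegree
                  (MvPolynomial.X i : MvPolynomial (Fin n) (ZMod 2)).totalDegree :=
                MvPolynomial.totalDegree_add _ _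
            _ ≤ 1 := by
                rw [MvPolynomial.totalDegree_one, MvPolynomial.totalDegree_X]
                omega
      _ = k := by rw [Finset.sum_const, smul_eq_mul, mul_one, hKcard]
  -- nonzero points of g vanish on K and hence have weight ≤ k
  have hgsupp : ∀ x, g x ≠ 0 → ∀ i ∈ K, x i = 0 := by
    intro x hx i hi
    by_contra hne
    have hxi : x i = 1 := by rcases zmod2_cases (x i) with h | h; exact absurd h hne; exact h
    apply hx
    rw [hg]
    refine Finset.prod_eq_zero hi ?_
    rw [hxi]; decide
  have hgwt : ∀ x, g x ≠ 0 → wtv x ≤ k := by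
    intro x hx
    have hsub : (Finset.univ.filter fun i => x i = 1) ⊆ Kᶜ := by
      intro i hi
      rw [Finset.mem_compl]
      intro hiK
      have := hgsupp x hx i hiK
      rw [Finset.mem_filter] at hi
      rw [this] at hi
      exact absurd hi.2 (by decide)
    calc wtv x ≤ Kᶜ.card := Finset.card_le_card hsub
      _ = n - k := by rw [Finset.card_compl, hKcard, Fintype.card_fin]
      _ ≤ k := by omega
  have hgne : g ≠ 0 := by
    refine Function.ne_iff.mpr ⟨0, ?_⟩
    rw [hg]
    simp
  -- funcDeg g = k
  have hdeg : funcDeg g = k := by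
    have hle : funcDeg g ≤ k := le_trans (funcDeg_le g P hrep) htot
    have hge : k ≤ funcDeg g := by
      obtain ⟨Q, hQd, hQr⟩ := exists_poly_funcDeg g
      obtain ⟨x, hx, hxw⟩ := exists_high Q g hQr hgne
      have := hgwt x hx
      omega
    omega
  -- g annihilates G
  have hann : G * g = 0 := by
    funext x
    rw [Pi.mul_apply, Pi.zero_apply]
    by_cases hx : g x = 0
    · rw [hx, mul_zero]
    · have hw := hgwt x hx
      rw [hG x, if_pos hw, zero_mul]
  -- lower bound: every element of the AI set is ≥ k
  have hlow : ∀ d, (∃ h : (Fin n → ZMod 2) → ZMod 2, h ≠ 0 ∧ funcDeg h = d ∧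
      (G * h = 0 ∨ (G + 1) * h = 0)) → k ≤ d := by
    rintro d ⟨h, hne, hdeg', hor⟩
    obtain ⟨Q, hQd, hQr⟩ := exists_poly_funcDeg h
    rw [hdeg'] at hQd
    rcases hor with hor | hor
    · -- h vanishes on weight > k
      have hvan : ∀ x, k < wtv x → h x = 0 := by
        intro x hwx
        have := congrFun hor x
        rw [Pi.mul_apply, Pi.zero_apply, hG x, if_neg (by omega), one_mul] at this
        exact this
      obtain ⟨x, hx, hxw⟩ := exists_high Q h hQr hne
      have hwx : wtv x ≤ k := by
        by_contra hcon
        exact hx (hvan x (by omega))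
      omega
    · -- h vanishes on weight ≤ k
      have hvan : ∀ x, wtv x ≤ k → h x = 0 := by
        intro x hwx
        have := congrFun hor x
        rw [Pi.mul_apply, Pi.zero_apply, Pi.add_apply, Pi.one_apply, hG x,
          if_pos hwx, zero_add, one_mul] at this
        exact this
      obtain ⟨x, hx, hxw⟩ := exists_low Q h hQr hne
      have hwx : k < wtv x := by
        by_contra hcon
        exact hx (hvan x (by omega))
      omega
  -- conclude
  have hkmem : k ∈ {d | ∃ g : (Fin n → ZMod 2) → ZMod 2, g ≠ 0 ∧ funcDeg g = d ∧
      (G * g = 0 ∨ (G + 1) * g = 0)} := ⟨g, hgne, hdeg, Or.inl hann⟩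
  have h1 : AI G ≤ k := Nat.sInf_le hkmem
  have h2 : k ≤ AI G := hlow _ (Nat.sInf_mem ⟨k, hkmem⟩)
  omega
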